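/- PHD of an LMB (discrete case): for an LMB with parameters r : 𝕃 → [0,1) and pmfs p(·,ℓ), the intensity at (x,ℓ), defined as v(x,ℓ) = Σ_{L⊆𝕃, ℓ∈L} Σ over attribute assignments y with y(ℓ) = x of π({(y(ℓ'),ℓ') : ℓ'∈L}), equals r(ℓ)·p(x,ℓ). -/

import Mathlib

open Finset

/-- PHD (intensity) of an LMB (discrete case): the intensity at a labeled point
`(x₀, ℓ₀)` equals `r ℓ₀ * p x₀ ℓ₀`. -/
theorem lmb_phd
    {𝕃 X : Type*} [Fintype 𝕃] [DecidableEq 𝕃] [Fintype X] [DecidableEq X]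
    (r : 𝕃 → ℝ) (p : X → 𝕃 → ℝ)
    (hr0 : ∀ ℓ, 0 ≤ r ℓ) (hr1 : ∀ ℓ, r ℓ < 1)
    (hp0 : ∀ x ℓ, 0 ≤ p x ℓ) (hp1 : ∀ ℓ, ∑ x : X, p x ℓ = 1)
    (f : X → 𝕃 → ℝ) (hf : ∀ x ℓ, f x ℓ = r ℓ * p x ℓ / (1 - r ℓ))
    (x₀ : X) (ℓ₀ : 𝕃) :
    (∑ L : Finset 𝕃,
        if hmem : ℓ₀ ∈ L then
          ∑ y ∈ Finset.univ.filter (fun y : {a // a ∈ L} → X => y ⟨ℓ₀, hmem⟩ = x₀),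
            (∏ ℓ : 𝕃, (1 - r ℓ)) * ∏ ℓ ∈ L.attach, f (y ℓ) ℓ.1
        else 0)
      = r ℓ₀ * p x₀ ℓ₀ := by
  have hne : ∀ ℓ, (1 - r ℓ) ≠ 0 := fun ℓ => by have := hr1 ℓ; intro h; linarith [sub_eq_zero.mp h]
  set C : ℝ := ∏ ℓ : 𝕃, (1 - r ℓ) with hC
  set q : 𝕃 → ℝ := fun ℓ => r ℓ / (1 - r ℓ) with hq
  have hsumf : ∀ ℓ, ∑ x : X, f x ℓ = q ℓ := by
    intro ℓ
    simp only [hf, div_eq_mul_inv, ← Finset.sum_mul, ← Finset.mul_sum, hp1, mul_one, hq]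
  -- inner sum computation
  have hinner : ∀ (L : Finset 𝕃) (hmem : ℓ₀ ∈ L),
      (∑ y ∈ Finset.univ.filter (fun y : {a // a ∈ L} → X => y ⟨ℓ₀, hmem⟩ = x₀),
        (∏ ℓ : 𝕃, (1 - r ℓ)) * ∏ ℓ ∈ L.attach, f (y ℓ) ℓ.1)
      = C * (f x₀ ℓ₀ * ∏ ℓ ∈ L.erase ℓ₀, q ℓ) := by
    intro L hmem
    rw [← Finset.mul_sum]
    congr 1
    set ℓ₀' : {a // a ∈ L} := ⟨ℓ₀, hmem⟩ with hℓ₀'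
    set g : {a // a ∈ L} → X → ℝ :=
      fun ℓ x => if ℓ = ℓ₀' then (if x = x₀ then f x₀ ℓ₀ else 0) else f x ℓ.1 with hg
    have step1 : (∑ y ∈ Finset.univ.filter (fun y : {a // a ∈ L} → X => y ℓ₀' = x₀),
        ∏ ℓ ∈ L.attach, f (y ℓ) ℓ.1)
        = ∑ y : {a // a ∈ L} → X, ∏ ℓ : {a // a ∈ L}, g ℓ (y ℓ) := by
      rw [Finset.sum_filter]
      refine Finset.sum_congr rfl fun y _ => ?_
      rw [← Finset.univ_eq_attach]
      by_cases hy : y ℓ₀' = x₀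
      · simp only [hy, if_true]
        refine Finset.prod_congr rfl fun ℓ _ => ?_
        by_cases hℓ : ℓ = ℓ₀'
        · subst hℓ; simp only [hℓ₀'] at hy; simp [hg, hy, hℓ₀']
        · simp [hg, hℓ]
      · rw [if_neg hy]
        refine (Finset.prod_eq_zero (Finset.mem_univ ℓ₀') ?_).symm
        simp [hg, hy]
    rw [step1]
    have step2 : (∑ y : {a // a ∈ L} → X, ∏ ℓ : {a // a ∈ L}, g ℓ (y ℓ))
        = ∏ ℓ : {a // a ∈ L}, ∑ x : X, g ℓ x := by
      rw [Finset.prod_univ_sum]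
      rw [Fintype.piFinset_univ]
    rw [step2]
    rw [← Finset.mul_prod_erase Finset.univ _ (Finset.mem_univ ℓ₀')]
    congr 1
    · simp [hg]
    · rw [show (∏ ℓ ∈ L.erase ℓ₀, q ℓ) = ∏ ℓ ∈ Finset.univ.erase ℓ₀', q ℓ.1 from ?_]
      · refine Finset.prod_congr rfl fun ℓ hℓ => ?_
        have hℓne : ℓ ≠ ℓ₀' := (Finset.mem_erase.mp hℓ).1
        simp only [hg, if_neg hℓne]
        exact hsumf ℓ.1
      · refine Finset.prod_bij' (fun ℓ hℓ => (⟨ℓ, Finset.mem_of_mem_erase hℓ⟩ : {a // a ∈ L}))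
          (fun ℓ _ => ℓ.1) ?_ ?_ ?_ ?_ ?_
        · intro a ha
          rcases Finset.mem_erase.mp ha with ⟨hne', hmemL⟩
          refine Finset.mem_erase.mpr ⟨?_, Finset.mem_univ _⟩
          simpa [hℓ₀', Subtype.ext_iff] using hne'
        · intro a ha
          rcases Finset.mem_erase.mp ha with ⟨hne', _⟩
          refine Finset.mem_erase.mpr ⟨?_, a.2⟩
          simpa [hℓ₀', Subtype.ext_iff] using hne'
        · intros; rfl
        · intros; rfl
        · intros; rfl
  have hrw : ∀ L : Finset 𝕃,
      (if hmem : ℓ₀ ∈ L then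
          ∑ y ∈ Finset.univ.filter (fun y : {a // a ∈ L} → X => y ⟨ℓ₀, hmem⟩ = x₀),
            (∏ ℓ : 𝕃, (1 - r ℓ)) * ∏ ℓ ∈ L.attach, f (y ℓ) ℓ.1
        else 0)
      = if ℓ₀ ∈ L then C * (f x₀ ℓ₀ * ∏ ℓ ∈ L.erase ℓ₀, q ℓ) else 0 := by
    intro L
    by_cases hmem : ℓ₀ ∈ L
    · rw [dif_pos hmem, if_pos hmem, hinner L hmem]
    · rw [dif_neg hmem, if_neg hmem]
  rw [Finset.sum_congr rfl fun L _ => hrw L]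
  rw [← Finset.sum_filter]
  have hbij : (∑ L ∈ Finset.univ.filter (fun L : Finset 𝕃 => ℓ₀ ∈ L),
        C * (f x₀ ℓ₀ * ∏ ℓ ∈ L.erase ℓ₀, q ℓ))
      = ∑ S ∈ (Finset.univ.erase ℓ₀).powerset,
        C * (f x₀ ℓ₀ * ∏ ℓ ∈ S, q ℓ) := by
    refine Finset.sum_bij' (fun L _ => L.erase ℓ₀) (fun S _ => insert ℓ₀ S) ?_ ?_ ?_ ?_ ?_
    · intro L hL
      exact Finset.mem_powerset.mpr (Finset.erase_subset_erase _ (Finset.subset_univ L))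
    · intro S hS
      simp
    · intro L hL
      exact Finset.insert_erase (Finset.mem_filter.mp hL).2
    · intro S hS
      have : ℓ₀ ∉ S := fun h =>
        (Finset.mem_erase.mp (Finset.mem_powerset.mp hS h)).1 rfl
      exact Finset.erase_insert this
    · intro L hL
      rfl
  rw [hbij, ← Finset.mul_sum, ← Finset.mul_sum]
  have hpow : (∑ S ∈ (Finset.univ.erase ℓ₀).powerset, ∏ ℓ ∈ S, q ℓ)
      = ∏ ℓ ∈ Finset.univ.erase ℓ₀, (q ℓ + 1) := by
    rw [Finset.prod_add]
    refine Finset.sum_congr rfl fun S hS => ?_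
    simp
  rw [hpow]
  have hq1 : ∀ ℓ, q ℓ + 1 = (1 - r ℓ)⁻¹ := by
    intro ℓ
    have h := hne ℓ
    simp only [hq]
    field_simp
    ring
  rw [Finset.prod_congr rfl fun ℓ _ => hq1 ℓ]
  have hCsplit : C = (1 - r ℓ₀) * ∏ ℓ ∈ Finset.univ.erase ℓ₀, (1 - r ℓ) :=
    (Finset.mul_prod_erase Finset.univ _ (Finset.mem_univ ℓ₀)).symm
  rw [hCsplit, hf x₀ ℓ₀]
  have hprod : (∏ ℓ ∈ Finset.univ.erase ℓ₀, (1 - r ℓ)) *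
      ∏ ℓ ∈ Finset.univ.erase ℓ₀, (1 - r ℓ)⁻¹ = 1 := by
    rw [← Finset.prod_mul_distrib]
    exact Finset.prod_eq_one fun ℓ _ => mul_inv_cancel₀ (hne ℓ)
  have e1 : (1 - r ℓ₀) * (∏ ℓ ∈ Finset.univ.erase ℓ₀, (1 - r ℓ)) *
      (r ℓ₀ * p x₀ ℓ₀ / (1 - r ℓ₀) * ∏ ℓ ∈ Finset.univ.erase ℓ₀, (1 - r ℓ)⁻¹)
      = (r ℓ₀ * p x₀ ℓ₀) * ((1 - r ℓ₀) * (1 - r ℓ₀)⁻¹) *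
        ((∏ ℓ ∈ Finset.univ.erase ℓ₀, (1 - r ℓ)) *
          ∏ ℓ ∈ Finset.univ.erase ℓ₀, (1 - r ℓ)⁻¹) := by
    rw [div_eq_mul_inv]; ring
  rw [e1, mul_inv_cancel₀ (hne ℓ₀), hprod]
  ring
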